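/- Let d ≥ 2, k ≥ 1, l ∈ {1,…,d}, and α ∈ ℝ^d. Then there exist two coordinate-wise additive homeomorphisms f_1, f_2 : ℝ^d → ℝ^d such that f_1^{-1}(x) + f_2^{-1}(x) = (Σ_{i=1}^d α_i x_i)^k · e_l for all x ∈ ℝ^d, where e_l denotes the l-th standard basis vector of ℝ^d. In particular, the map x ↦ (Σ_{i=1}^d α_i x_i)^k · e_l is a sum of two inverses of coordinate-wise additive homeomorphisms. -/
import Mathlib

/-- `f : ℝ^{d₁} → ℝ^{d₂}` is coordinate-wise additive: `f(z) = Σ_i f_i(z_i)`. -/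
def CoordAdditive {d₁ d₂ : ℕ} (f : (Fin d₁ → ℝ) → (Fin d₂ → ℝ)) : Prop :=
  ∃ F : Fin d₁ → ℝ → (Fin d₂ → ℝ), ∀ z, f z = ∑ i, F i (z i)

lemma linearMap_coordAdditive {d : ℕ} (L : (Fin d → ℝ) →ₗ[ℝ] (Fin d → ℝ)) :
    CoordAdditive ⇑L := by
  refine ⟨fun i t => L (Pi.single i t), fun z => ?_⟩
  rw [← map_sum, Finset.univ_sum_single]

lemma sum_ite_key {d : ℕ} (a : Fin d → ℝ) (m : Fin d) (S : ℝ) (x : Fin d → ℝ) :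
    (∑ i', a i' * (if i' = m then S else x i')) = (∑ i', a i' * x i') + a m * (S - x m) := by
  have h : ∀ i' : Fin d, a i' * (if i' = m then S else x i')
      = a i' * x i' + (if i' = m then a m * (S - x m) else 0) := by
    intro i'; by_cases h : i' = m <;> simp [h] <;> ring
  simp_rw [h, Finset.sum_add_distrib, Finset.sum_ite_eq', Finset.mem_univ, if_true]

noncomputable def elemEquiv {d : ℕ} (a : Fin d → ℝ) (m : Fin d) (ham : a m ≠ 0) :
    (Fin d → ℝ) ≃ₗ[ℝ] (Fin d → ℝ) where
  toFun x := fun i => if i = m then ∑ i', a i' * x i' else x i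
  invFun y := fun i => if i = m then y m + (y m - ∑ i', a i' * y i') / a m else y i
  map_add' x y := by
    funext i; by_cases h : i = m <;>
      simp [h, mul_add, Finset.sum_add_distrib]
  map_smul' c x := by
    funext i; by_cases h : i = m <;>
      simp [h, Finset.mul_sum, mul_left_comm]
  left_inv x := by
    funext i
    by_cases h : i = m
    · simp only [h, if_true, if_pos rfl]
      rw [sum_ite_key a m _ x]
      field_simp
      ring
    · simp [h]
  right_inv y := by
    funext i
    by_cases h : i = m
    · simp only [h, if_true, if_pos rfl]
      rw [sum_ite_key a m _ y]
      field_simp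
      ring
    · simp [h]

lemma aux {d : ℕ} (k : ℕ) (l j : Fin d) (hjl : j ≠ l) (a : Fin d → ℝ) (γ : ℝ)
    (B : (Fin d → ℝ) ≃ₗ[ℝ] (Fin d → ℝ))
    (hB : ∀ x, (∑ i, a i * x i) = γ * B x j) :
    ∃ f₁ f₂ : (Fin d → ℝ) ≃ₜ (Fin d → ℝ),
      CoordAdditive ⇑f₁ ∧ CoordAdditive ⇑f₂ ∧
      ∀ x : Fin d → ℝ,
        f₁.symm x + f₂.symm x = (∑ i, a i * x i) ^ k • (Pi.single l 1 : Fin d → ℝ) := by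
  have hBc : Continuous ⇑B := B.toLinearMap.continuous_of_finiteDimensional
  have hBsc : Continuous ⇑B.symm := B.symm.toLinearMap.continuous_of_finiteDimensional
  have hsingle : (Pi.single l 1 : Fin d → ℝ) j = 0 := Pi.single_eq_of_ne hjl 1
  set el : Fin d → ℝ := Pi.single l 1 with hel
  -- f₁ = B⁻¹
  refine ⟨⟨B.symm.toEquiv, hBsc, hBc⟩, ?_, ?_, ?_, ?_⟩
  -- f₂
  · refine ⟨⟨fun y => (-(γ * y j)) ^ k • (B.symm el) - B.symm y,
      fun x => (∑ i, a i * x i) ^ k • el - B x, ?_, ?_⟩, ?_, ?_⟩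
    · -- left_inv
      intro y
      have h1 : B ((-(γ * y j)) ^ k • (B.symm el) - B.symm y)
          = (-(γ * y j)) ^ k • el - y := by
        rw [map_sub, map_smul, B.apply_symm_apply, B.apply_symm_apply]
      have h2 : (∑ i, a i * ((-(γ * y j)) ^ k • (B.symm el) - B.symm y) i)
          = -(γ * y j) := by
        rw [hB, h1]
        simp [hsingle]
      simp only [h2, h1]
      abel
    · -- right_inv
      intro x
      have h1 : ((∑ i, a i * x i) ^ k • el - B x) j = -(B x j) := by
        simp [hsingle]
      have h2 : (-(γ * ((∑ i, a i * x i) ^ k • el - B x) j)) ^ k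
          = (∑ i, a i * x i) ^ k := by
        rw [h1, hB x]; ring_nf
      have h3 : B.symm ((∑ i, a i * x i) ^ k • el - B x)
          = (∑ i, a i * x i) ^ k • B.symm el - x := by
        rw [map_sub, map_smul, B.symm_apply_apply]
      simp only [h2, h3]
      abel
    · exact (((continuous_const.mul (continuous_apply j)).neg.pow k).smul
        continuous_const).sub hBsc
    · refine Continuous.sub ?_ hBc
      exact (Continuous.pow (continuous_finset_sum _
        (fun i _ => continuous_const.mul (continuous_apply i))) k).smul continuous_const
  · exact linearMap_coordAdditive B.symm.toLinearMap
  · -- CoordAdditive f₂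
    refine ⟨fun i t => (if i = j then (-(γ * t)) ^ k • (B.symm el) else 0)
      - B.symm (Pi.single i t), fun y => ?_⟩
    have : B.symm y = ∑ i, B.symm (Pi.single i (y i)) := by
      rw [← map_sum, Finset.univ_sum_single]
    simp only [Finset.sum_sub_distrib, Finset.sum_ite_eq', Finset.mem_univ, if_true]
    rw [← this]
    rfl
  · intro x
    have hf1 : ((⟨B.symm.toEquiv, hBsc, hBc⟩ : (Fin d → ℝ) ≃ₜ (Fin d → ℝ)).symm) x = B x := rfl
    rw [hf1]
    show B x + ((∑ i, a i * x i) ^ k • el - B x) = _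
    abel

/-- For `d ≥ 2`, `k ≥ 1`, `l ∈ {1,…,d}` and `α ∈ ℝ^d`, there are two coordinate-wise additive
homeomorphisms `f₁, f₂` of `ℝ^d` such that
`f₁⁻¹(x) + f₂⁻¹(x) = (Σ_i α_i x_i)^k · e_l` for all `x`, where `e_l` is the `l`-th standard
basis vector. -/
theorem power_of_linear_form_is_sum_of_two_additive_inverses (d k : ℕ)
    (hd : 2 ≤ d) (hk : 1 ≤ k) (l : Fin d) (a : Fin d → ℝ) :
    ∃ f₁ f₂ : (Fin d → ℝ) ≃ₜ (Fin d → ℝ),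
      CoordAdditive ⇑f₁ ∧ CoordAdditive ⇑f₂ ∧
      ∀ x : Fin d → ℝ,
        f₁.symm x + f₂.symm x = (∑ i, a i * x i) ^ k • (Pi.single l 1 : Fin d → ℝ) := by
  by_cases hA : ∃ m : Fin d, m ≠ l ∧ a m ≠ 0
  · obtain ⟨m, hml, ham⟩ := hA
    refine aux k l m hml a 1 (elemEquiv a m ham) ?_
    intro x
    simp [elemEquiv]
  · push_neg at hA
    haveI : Nontrivial (Fin d) := Fin.nontrivial_iff_two_le.mpr hd
    obtain ⟨j, hjl⟩ := exists_ne l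
    refine aux k l j hjl a (a l) (LinearEquiv.funCongrLeft ℝ ℝ (Equiv.swap j l)) ?_
    intro x
    have : ∀ i : Fin d, i ≠ l → a i * x i = 0 := fun i hi => by rw [hA i hi]; ring
    rw [Finset.sum_eq_single l (fun b _ hb => this b hb) (by simp)]
    have : (LinearEquiv.funCongrLeft ℝ ℝ (Equiv.swap j l)) x j = x l := by
      simp [LinearEquiv.funCongrLeft]
    rw [this]
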